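/- Let S, S̃ ∈ ℝ^{n×n} be positive definite and A₁,...,A_m ∈ ℝ^{n×n} symmetric. Define H ∈ ℝ^{m×m} by H_{jk} = tr[S⁻¹ A_j S⁻¹ A_k] and H̃ by H̃_{jk} = tr[S̃⁻¹ A_j S̃⁻¹ A_k]. If α_S⁻¹ S ⪯ S̃ ⪯ α_S S for some α_S ≥ 1 (in the PSD order), then α_S⁻² H ⪯ H̃ ⪯ α_S² H. -/

import Mathlib

open Matrix


variable {n : ℕ}

lemma psd_smul {c : ℝ} (hc : 0 ≤ c) {A : Matrix (Fin n) (Fin n) ℝ} (hA : A.PosSemidef) :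
    (c • A).PosSemidef := by
  refine Matrix.PosSemidef.of_dotProduct_mulVec_nonneg ?_ fun x => ?_
  · unfold Matrix.IsHermitian
    rw [conjTranspose_smul, hA.1.eq]
    simp
  · rw [smul_mulVec, dotProduct_smul, smul_eq_mul]
    exact mul_nonneg hc (hA.dotProduct_mulVec_nonneg x)

lemma pd_smul {c : ℝ} (hc : 0 < c) {A : Matrix (Fin n) (Fin n) ℝ} (hA : A.PosDef) :
    (c • A).PosDef := by
  refine Matrix.PosDef.of_dotProduct_mulVec_pos (psd_smul hc.le hA.posSemidef).1 fun x hx => ?_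
  rw [smul_mulVec, dotProduct_smul, smul_eq_mul]
  exact mul_pos hc (hA.dotProduct_mulVec_pos hx)

lemma psd_trace_nonneg {M : Matrix (Fin n) (Fin n) ℝ} (hM : M.PosSemidef) : 0 ≤ M.trace := by
  rw [Matrix.trace]
  refine Finset.sum_nonneg fun i _ => ?_
  have := hM.dotProduct_mulVec_nonneg (Pi.single i 1)
  simpa [Matrix.diag, dotProduct, mulVec, Pi.single_apply, Finset.sum_ite_eq'] using this

open scoped MatrixOrder in
lemma trace_mul_psd_nonneg {A B : Matrix (Fin n) (Fin n) ℝ} (hA : A.PosSemidef)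
    (hB : B.PosSemidef) : 0 ≤ (A * B).trace := by
  obtain ⟨C, rfl⟩ : ∃ C : Matrix (Fin n) (Fin n) ℝ, A = Cᴴ * C :=
    ⟨CFC.sqrt A, by rw [(CFC.sqrt_nonneg A).posSemidef.1.eq, CFC.sqrt_mul_sqrt_self A hA.nonneg]⟩
  rw [Matrix.mul_assoc, trace_mul_comm]
  exact psd_trace_nonneg (hB.mul_mul_conjTranspose_same C)

lemma trace_quad_mono {B C M : Matrix (Fin n) (Fin n) ℝ} (hB : B.PosSemidef) (hC : C.PosSemidef)
    (hCB : (C - B).PosSemidef) (hM : Mᵀ = M) :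
    (B * M * B * M).trace ≤ (C * M * C * M).trace := by
  have hMh : Mᴴ = M := hM
  have key : (C * M * C * M).trace - (B * M * B * M).trace
      = ((C - B) * (M * (C + B) * M)).trace := by
    have h1 : (C - B) * (M * (C + B) * M)
        = (C * M * C * M - B * M * B * M) + (C * M * (B * M) - B * M * (C * M)) := by
      noncomm_ring
    rw [h1, trace_add, trace_sub, trace_sub, trace_mul_comm (C * M) (B * M)]
    ring
  have hX : (M * (C + B) * M).PosSemidef := by
    have := (hC.add hB).mul_mul_conjTranspose_same M
    rwa [hMh] at this
  linarith [trace_mul_psd_nonneg hCB hX]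

open scoped MatrixOrder in
lemma matrix_inv_le_one {W : Matrix (Fin n) (Fin n) ℝ} (hW : W.PosDef)
    (h : (W - 1).PosSemidef) : (1 - W⁻¹).PosSemidef := by
  obtain ⟨Q, hQh, hQ2⟩ : ∃ Q : Matrix (Fin n) (Fin n) ℝ, Q.PosSemidef ∧ Q * Q = W⁻¹ :=
    ⟨_, (CFC.sqrt_nonneg W⁻¹).posSemidef, CFC.sqrt_mul_sqrt_self W⁻¹ hW.inv.posSemidef.nonneg⟩
  have hdet : IsUnit Q.det := by
    have h2 : Q.det * Q.det = W⁻¹.det := by rw [← det_mul, hQ2]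
    have : W⁻¹.det ≠ 0 := hW.inv.det_pos.ne'
    refine isUnit_iff_ne_zero.mpr fun h0 => this ?_
    rw [← h2, h0, mul_zero]
  have hWeq : W = Q⁻¹ * Q⁻¹ := by
    rw [← Matrix.mul_inv_rev, hQ2, Matrix.nonsing_inv_nonsing_inv _ hW.det_pos.ne'.isUnit]
  have hkey : Q * (W - 1) * Q = 1 - W⁻¹ := by
    rw [mul_sub, sub_mul, mul_one, hQ2]
    rw [hWeq]
    rw [show Q * (Q⁻¹ * Q⁻¹) * Q = (Q * Q⁻¹) * (Q⁻¹ * Q) by simp only [Matrix.mul_assoc]]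
    rw [Matrix.mul_nonsing_inv _ hdet, Matrix.nonsing_inv_mul _ hdet, one_mul]
  rw [← hkey]
  have := h.mul_mul_conjTranspose_same Q
  rwa [hQh.1.eq] at this

open scoped MatrixOrder in
lemma inv_anti {A B : Matrix (Fin n) (Fin n) ℝ} (hA : A.PosDef) (hB : B.PosDef)
    (h : (B - A).PosSemidef) : (A⁻¹ - B⁻¹).PosSemidef := by
  obtain ⟨R, hRh, hR2⟩ : ∃ R : Matrix (Fin n) (Fin n) ℝ, R.PosSemidef ∧ R * R = A⁻¹ :=
    ⟨_, (CFC.sqrt_nonneg A⁻¹).posSemidef, CFC.sqrt_mul_sqrt_self A⁻¹ hA.inv.posSemidef.nonneg⟩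
  have hdet : IsUnit R.det := by
    have h2 : R.det * R.det = A⁻¹.det := by rw [← det_mul, hR2]
    have : A⁻¹.det ≠ 0 := hA.inv.det_pos.ne'
    refine isUnit_iff_ne_zero.mpr fun h0 => this ?_
    rw [← h2, h0, mul_zero]
  have hAeq : A = R⁻¹ * R⁻¹ := by
    rw [← Matrix.mul_inv_rev, hR2, Matrix.nonsing_inv_nonsing_inv _ hA.det_pos.ne'.isUnit]
  have hRAR : R * A * R = 1 := by
    rw [hAeq, show R * (R⁻¹ * R⁻¹) * R = (R * R⁻¹) * (R⁻¹ * R) by simp only [Matrix.mul_assoc],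
      Matrix.mul_nonsing_inv _ hdet, Matrix.nonsing_inv_mul _ hdet, one_mul]
  have hWm1 : (R * B * R - 1).PosSemidef := by
    have := h.mul_mul_conjTranspose_same R
    rw [hRh.1.eq] at this
    rwa [show R * (B - A) * R = R * B * R - R * A * R by rw [mul_sub, sub_mul], hRAR] at this
  have hW : (R * B * R).PosDef := by
    have h1 : R * B * R = 1 + (R * B * R - 1) := by abel
    rw [h1]
    exact Matrix.PosDef.add_posSemidef Matrix.PosDef.one hWm1
  have hfin := matrix_inv_le_one hW hWm1
  have hWinv : (R * B * R)⁻¹ = R⁻¹ * B⁻¹ * R⁻¹ := by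
    rw [Matrix.mul_inv_rev, Matrix.mul_inv_rev, Matrix.mul_assoc]
  have hkey : R * (1 - (R * B * R)⁻¹) * R = A⁻¹ - B⁻¹ := by
    rw [hWinv, mul_sub, sub_mul, mul_one, hR2]
    congr 1
    rw [show R * (R⁻¹ * B⁻¹ * R⁻¹) * R = (R * R⁻¹) * B⁻¹ * (R⁻¹ * R) by simp only [Matrix.mul_assoc],
      Matrix.mul_nonsing_inv _ hdet, Matrix.nonsing_inv_mul _ hdet, one_mul, mul_one]
  rw [← hkey]
  have := hfin.mul_mul_conjTranspose_same R
  rwa [hRh.1.eq] at this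

lemma trace4_comm (P X Y : Matrix (Fin n) (Fin n) ℝ) :
    (P * X * P * Y).trace = (P * Y * P * X).trace := by
  rw [show P * X * P * Y = (P * X) * (P * Y) by rw [Matrix.mul_assoc], trace_mul_comm,
    ← Matrix.mul_assoc]

lemma dot_eq_sum (m : ℕ) (H : Matrix (Fin m) (Fin m) ℝ) (x : Fin m → ℝ) :
    x ⬝ᵥ (H *ᵥ x) = ∑ j, ∑ k, x j * x k * H j k := by
  simp only [dotProduct, mulVec, Finset.mul_sum]
  exact Finset.sum_congr rfl fun j _ => Finset.sum_congr rfl fun k _ => by ring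

lemma quad_expand (m : ℕ) (P : Matrix (Fin n) (Fin n) ℝ) (A : Fin m → Matrix (Fin n) (Fin n) ℝ)
    (x : Fin m → ℝ) :
    (P * (∑ j, x j • A j) * P * (∑ k, x k • A k)).trace
      = ∑ j, ∑ k, x j * x k * (P * A j * P * A k).trace := by
  simp only [Matrix.mul_sum, Matrix.sum_mul, Matrix.mul_smul, Matrix.smul_mul, trace_sum,
    trace_smul, smul_eq_mul, Finset.smul_sum]
  rw [Finset.sum_comm]
  exact Finset.sum_congr rfl fun j _ => Finset.sum_congr rfl fun k _ => by
    ring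

lemma smul_inv_eq {c : ℝ} (hc : c ≠ 0) {S : Matrix (Fin n) (Fin n) ℝ} (hS : S.PosDef) :
    (c • S)⁻¹ = c⁻¹ • S⁻¹ := by
  refine Matrix.inv_eq_left_inv ?_
  rw [Matrix.smul_mul, Matrix.mul_smul, smul_smul, inv_mul_cancel₀ hc, one_smul,
    Matrix.nonsing_inv_mul _ hS.det_pos.ne'.isUnit]

lemma herm_smul {m : ℕ} (c : ℝ) {H : Matrix (Fin m) (Fin m) ℝ} (h : H.IsHermitian) :
    (c • H).IsHermitian := by
  show (c • H)ᴴ = c • H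
  rw [conjTranspose_smul, h.eq, star_trivial]


/-- Approximate Hessian: if `α⁻¹ S ⪯ S̃ ⪯ α S` (Loewner order) with `α ≥ 1`, then the
Hessians `H_{jk} = tr[S⁻¹ A_j S⁻¹ A_k]` and `H̃_{jk} = tr[S̃⁻¹ A_j S̃⁻¹ A_k]` satisfy
`α⁻² H ⪯ H̃ ⪯ α² H`. -/
theorem approximate_hessian (m n : ℕ) (α : ℝ) (hα : 1 ≤ α)
    (S St : Matrix (Fin n) (Fin n) ℝ) (hS : S.PosDef) (hSt : St.PosDef)
    (A : Fin m → Matrix (Fin n) (Fin n) ℝ) (hA : ∀ j, (A j)ᵀ = A j)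
    (H Ht : Matrix (Fin m) (Fin m) ℝ)
    (hH : ∀ j k, H j k = (S⁻¹ * A j * S⁻¹ * A k).trace)
    (hHt : ∀ j k, Ht j k = (St⁻¹ * A j * St⁻¹ * A k).trace)
    (hlow : (St - α⁻¹ • S).PosSemidef) (hup : (α • S - St).PosSemidef) :
    (Ht - (α ^ 2)⁻¹ • H).PosSemidef ∧ ((α ^ 2) • H - Ht).PosSemidef := by
  have hα0 : (0 : ℝ) < α := lt_of_lt_of_le one_pos hα
  -- symmetry of H and Ht
  have hHsym : H.IsHermitian := by
    show Hᴴ = H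
    ext i j
    simp only [conjTranspose_apply, star_trivial]
    rw [hH j i, hH i j, trace4_comm]
  have hHtsym : Ht.IsHermitian := by
    show Htᴴ = Ht
    ext i j
    simp only [conjTranspose_apply, star_trivial]
    rw [hHt j i, hHt i j, trace4_comm]
  -- Loewner bounds on inverses
  have h1 : (St⁻¹ - α⁻¹ • S⁻¹).PosSemidef := by
    have hp : (α • S).PosDef := pd_smul hα0 hS
    have := inv_anti hSt hp hup
    rwa [smul_inv_eq hα0.ne' hS] at this
  have h2 : (α • S⁻¹ - St⁻¹).PosSemidef := by
    have hp : (α⁻¹ • S).PosDef := pd_smul (inv_pos.mpr hα0) hS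
    have := inv_anti hp hSt hlow
    rwa [smul_inv_eq (inv_pos.mpr hα0).ne' hS, inv_inv] at this
  -- quadratic forms
  have hqH : ∀ x : Fin m → ℝ,
      x ⬝ᵥ (H *ᵥ x) = (S⁻¹ * (∑ j, x j • A j) * S⁻¹ * (∑ k, x k • A k)).trace := by
    intro x
    rw [dot_eq_sum, quad_expand]
    exact Finset.sum_congr rfl fun j _ => Finset.sum_congr rfl fun k _ => by rw [hH]
  have hqHt : ∀ x : Fin m → ℝ,
      x ⬝ᵥ (Ht *ᵥ x) = (St⁻¹ * (∑ j, x j • A j) * St⁻¹ * (∑ k, x k • A k)).trace := by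
    intro x
    rw [dot_eq_sum, quad_expand]
    exact Finset.sum_congr rfl fun j _ => Finset.sum_congr rfl fun k _ => by rw [hHt]
  have hMsym : ∀ x : Fin m → ℝ, (∑ j, x j • A j)ᵀ = ∑ j, x j • A j := by
    intro x
    rw [transpose_sum]
    exact Finset.sum_congr rfl fun j _ => by rw [transpose_smul, hA]
  have hsq : (α ^ 2)⁻¹ = α⁻¹ * α⁻¹ := by rw [sq, mul_inv]
  constructor
  · refine Matrix.PosSemidef.of_dotProduct_mulVec_nonneg (hHtsym.sub (herm_smul _ hHsym)) fun x => ?_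
    simp only [star_trivial, sub_mulVec, dotProduct_sub, smul_mulVec, dotProduct_smul,
      smul_eq_mul, sub_nonneg]
    set M := ∑ j, x j • A j with hMdef
    have hmono := trace_quad_mono (B := α⁻¹ • S⁻¹) (C := St⁻¹) (M := M)
      (psd_smul (inv_pos.mpr hα0).le hS.inv.posSemidef) hSt.inv.posSemidef h1 (hMsym x)
    have hB : (α⁻¹ • S⁻¹) * M * (α⁻¹ • S⁻¹) * M = (α⁻¹ * α⁻¹) • (S⁻¹ * M * S⁻¹ * M) := by
      simp only [Matrix.smul_mul, Matrix.mul_smul, smul_smul]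
    rw [hB, trace_smul, smul_eq_mul] at hmono
    rw [hqH x, hqHt x, hsq]
    exact hmono
  · refine Matrix.PosSemidef.of_dotProduct_mulVec_nonneg ((herm_smul _ hHsym).sub hHtsym) fun x => ?_
    simp only [star_trivial, sub_mulVec, dotProduct_sub, smul_mulVec, dotProduct_smul,
      smul_eq_mul, sub_nonneg]
    set M := ∑ j, x j • A j with hMdef
    have hmono := trace_quad_mono (B := St⁻¹) (C := α • S⁻¹) (M := M)
      hSt.inv.posSemidef (psd_smul hα0.le hS.inv.posSemidef) h2 (hMsym x)
    have hC : (α • S⁻¹) * M * (α • S⁻¹) * M = (α * α) • (S⁻¹ * M * S⁻¹ * M) := by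
      simp only [Matrix.smul_mul, Matrix.mul_smul, smul_smul]
    rw [hC, trace_smul, smul_eq_mul] at hmono
    rw [hqH x, hqHt x, sq]
    exact hmono
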